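/- Let E be a real normed vector space (e.g., ℝ^d) and k : E → ℝ be twice continuously differentiable with ‖D²k(x)‖ ≤ M for all x ∈ E. Let c ∈ E, let a, b ∈ E satisfy a + b = 2c, and let p_1, …, p_m ∈ E (m ≥ 1). If ‖a − c‖ ≤ r and ‖p_l − c‖ ≤ r for all l, then |(k(a) + k(b)) − (1/m)·Σ_{l=1}^{m} (k(p_l) + k(2c − p_l))| ≤ 2·M·r². -/

import Mathlib

open Finset

set_option maxHeartbeats 1000000 in
lemma norm_fderiv_fderiv_eq' {E : Type*} [NormedAddCommGroup E] [NormedSpace ℝ E]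
    (k : E → ℝ) (x : E) :
    ‖fderiv ℝ (fderiv ℝ k) x‖ = ‖iteratedFDeriv ℝ 2 k x‖ := by
  rw [← norm_iteratedFDeriv_fderiv, ← norm_fderiv_iteratedFDeriv,
    iteratedFDeriv_zero_eq_comp, (continuousMultilinearCurryFin0 ℝ E
      (E →L[ℝ] ℝ)).symm.comp_fderiv]
  refine ContinuousLinearMap.opNorm_ext _ _ fun v => ?_
  exact ((continuousMultilinearCurryFin0 ℝ E (E →L[ℝ] ℝ)).symm.norm_map _).symm

lemma key_pointwise {E : Type*} [NormedAddCommGroup E] [NormedSpace ℝ E]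
    (k : E → ℝ) (hk : ContDiff ℝ 2 k) (M : ℝ)
    (hM : ∀ x : E, ‖iteratedFDeriv ℝ 2 k x‖ ≤ M)
    (c x : E) : |k x + k ((2:ℝ) • c - x) - 2 * k c| ≤ M * ‖x - c‖ ^ 2 := by
  have hd : Differentiable ℝ k := hk.differentiable two_ne_zero
  have hd' : Differentiable ℝ (fderiv ℝ k) :=
    (hk.fderiv_right (m := 1) le_rfl).differentiable one_ne_zero
  have lip : ∀ u v : E, ‖fderiv ℝ k u - fderiv ℝ k v‖ ≤ M * ‖u - v‖ := by
    intro u v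
    refine Convex.norm_image_sub_le_of_norm_fderiv_le
      (fun z _ => hd' z) (fun z _ => ?_) convex_univ
      (Set.mem_univ v) (Set.mem_univ u)
    rw [norm_fderiv_fderiv_eq']
    exact hM z
  set h : E := x - c with hh
  set φ : ℝ → ℝ := fun t => k (c + t • h) + k (c - t • h) - 2 * k c with hφ
  have hderiv : ∀ t : ℝ, HasDerivAt φ
      ((fderiv ℝ k (c + t • h)) h - (fderiv ℝ k (c - t • h)) h) t := by
    intro t
    have h1 : HasDerivAt (fun t : ℝ => c + t • h) h t := by
      simpa using ((hasDerivAt_id t).smul_const h).const_add c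
    have h2 : HasDerivAt (fun t : ℝ => c - t • h) (-h) t := by
      simpa [sub_eq_add_neg] using (((hasDerivAt_id t).smul_const h).neg).const_add c
    have H1 := (hd (c + t • h)).hasFDerivAt.comp_hasDerivAt t h1
    have H2 := (hd (c - t • h)).hasFDerivAt.comp_hasDerivAt t h2
    have := (H1.add H2).sub_const (2 * k c)
    simpa [hφ, map_neg, sub_eq_add_neg] using this
  have hM0 : 0 ≤ M := le_trans (norm_nonneg _) (hM c)
  have bound : ∀ t ∈ Set.Ico (0:ℝ) 1,
      ‖(fderiv ℝ k (c + t • h)) h - (fderiv ℝ k (c - t • h)) h‖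
        ≤ 2 * M * ‖h‖ ^ 2 * t := by
    intro t ht
    have h3 : (c + t • h) - (c - t • h) = (2 * t) • h := by
      rw [two_mul, add_smul]; abel
    calc ‖(fderiv ℝ k (c + t • h)) h - (fderiv ℝ k (c - t • h)) h‖
        = ‖(fderiv ℝ k (c + t • h) - fderiv ℝ k (c - t • h)) h‖ := by
          rw [ContinuousLinearMap.sub_apply]
      _ ≤ ‖fderiv ℝ k (c + t • h) - fderiv ℝ k (c - t • h)‖ * ‖h‖ :=
          ContinuousLinearMap.le_opNorm _ _
      _ ≤ (M * ‖(c + t • h) - (c - t • h)‖) * ‖h‖ := by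
          exact mul_le_mul_of_nonneg_right (lip _ _) (norm_nonneg _)
      _ = (M * (2 * t * ‖h‖)) * ‖h‖ := by
          rw [h3, norm_smul, Real.norm_eq_abs, abs_of_nonneg (by linarith [ht.1] : (0:ℝ) ≤ 2 * t)]
      _ = 2 * M * ‖h‖ ^ 2 * t := by ring
  have hB : ∀ t : ℝ, HasDerivAt (fun t => M * ‖h‖ ^ 2 * t ^ 2)
      (2 * M * ‖h‖ ^ 2 * t) t := by
    intro t
    have := ((hasDerivAt_pow 2 t).const_mul (M * ‖h‖ ^ 2))
    simpa [mul_comm, mul_assoc, mul_left_comm] using this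
  have main := image_norm_le_of_norm_deriv_right_le_deriv_boundary
    (f := φ) (a := 0) (b := 1)
    (fun t _ => (hderiv t).continuousAt.continuousWithinAt)
    (fun t _ => (hderiv t).hasDerivWithinAt)
    (by simp [hφ]; ring) hB (fun t ht => bound t ht)
  have h1 := main (Set.right_mem_Icc.mpr zero_le_one)
  rw [hφ] at h1
  simp only [one_smul] at h1
  have hx1 : c + h = x := by rw [hh]; abel
  have hx2 : c - h = (2:ℝ) • c - x := by rw [hh, two_smul]; abel
  rw [hx1, hx2, Real.norm_eq_abs] at h1
  calc |k x + k ((2:ℝ) • c - x) - 2 * k c| ≤ M * ‖h‖ ^ 2 * 1 ^ 2 := h1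
    _ = M * ‖x - c‖ ^ 2 := by rw [hh]; ring

/-- Local consistency estimate between edge-averaged and
element-averaged coefficient values: if `k : E → ℝ` is twice continuously differentiable
with `‖D²k(x)‖ ≤ M` everywhere, `a + b = 2c`, `‖a − c‖ ≤ r` and `‖p_l − c‖ ≤ r` for all
`l`, then `|(k(a) + k(b)) − (1/m) ∑_l (k(p_l) + k(2c − p_l))| ≤ 2 M r²`. -/
theorem abs_edge_average_sub_reflected_average_le
    {E : Type*} [NormedAddCommGroup E] [NormedSpace ℝ E]
    (k : E → ℝ) (hk : ContDiff ℝ 2 k)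
    (M : ℝ) (hM : ∀ x : E, ‖iteratedFDeriv ℝ 2 k x‖ ≤ M)
    (c a b : E) (hab : a + b = (2 : ℝ) • c)
    (m : ℕ) (hm : 1 ≤ m) (p : Fin m → E) (r : ℝ)
    (ha : ‖a - c‖ ≤ r) (hp : ∀ l, ‖p l - c‖ ≤ r) :
    |(k a + k b) - (1 / (m : ℝ)) * ∑ l, (k (p l) + k ((2 : ℝ) • c - p l))| ≤
      2 * M * r ^ 2 := by
  have hM0 : 0 ≤ M := le_trans (norm_nonneg _) (hM c)
  have hr0 : 0 ≤ r := le_trans (norm_nonneg _) ha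
  have hm0 : (0:ℝ) < (m:ℝ) := by exact_mod_cast hm
  have hb : b = (2:ℝ) • c - a := by rw [← hab]; abel
  have bnd : ∀ x : E, ‖x - c‖ ≤ r →
      |k x + k ((2:ℝ) • c - x) - 2 * k c| ≤ M * r ^ 2 := by
    intro x hx
    refine (key_pointwise k hk M hM c x).trans ?_
    exact mul_le_mul_of_nonneg_left (pow_le_pow_left₀ (norm_nonneg _) hx 2) hM0
  have eq1 : (k a + k b) - (1 / (m:ℝ)) * ∑ l, (k (p l) + k ((2:ℝ) • c - p l)) =
      (k a + k b - 2 * k c)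
        - (1 / (m:ℝ)) * ∑ l, (k (p l) + k ((2:ℝ) • c - p l) - 2 * k c) := by
    rw [Finset.sum_sub_distrib, Finset.sum_const, card_univ, Fintype.card_fin,
      nsmul_eq_mul]
    field_simp
    ring
  rw [eq1]
  have hA : |k a + k b - 2 * k c| ≤ M * r ^ 2 := by
    rw [hb]; exact bnd a ha
  have hT : |(1 / (m:ℝ)) * ∑ l, (k (p l) + k ((2:ℝ) • c - p l) - 2 * k c)|
      ≤ M * r ^ 2 := by
    rw [abs_mul, abs_of_nonneg (by positivity : (0:ℝ) ≤ 1 / (m:ℝ))]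
    calc (1 / (m:ℝ)) * |∑ l, (k (p l) + k ((2:ℝ) • c - p l) - 2 * k c)|
        ≤ (1 / (m:ℝ)) * ∑ l, |k (p l) + k ((2:ℝ) • c - p l) - 2 * k c| := by
          gcongr
          exact Finset.abs_sum_le_sum_abs _ _
      _ ≤ (1 / (m:ℝ)) * ∑ _l : Fin m, (M * r ^ 2) := by
          gcongr with l
          exact bnd (p l) (hp l)
      _ = M * r ^ 2 := by
          rw [Finset.sum_const, card_univ, Fintype.card_fin, nsmul_eq_mul]
          field_simp
  calc |(k a + k b - 2 * k c)
        - (1 / (m:ℝ)) * ∑ l, (k (p l) + k ((2:ℝ) • c - p l) - 2 * k c)|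
      ≤ |k a + k b - 2 * k c|
        + |(1 / (m:ℝ)) * ∑ l, (k (p l) + k ((2:ℝ) • c - p l) - 2 * k c)| :=
        abs_sub _ _
    _ ≤ M * r ^ 2 + M * r ^ 2 := add_le_add hA hT
    _ = 2 * M * r ^ 2 := by ring
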